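/- arXiv:2401.04594 — 4 statements merged into one kernel-verified Lean document; each statement's English description precedes it below -/
import Mathlib

section
/- Continuity of infinite sums: let X be a complete lattice, let (f_i)_{i∈I} be a family of Scott-continuous functions f_i : X → U (i.e. f_i(⨆D) = ⨆_{x∈D} f_i(x) for every nonempty directed D ⊆ X), and let D ⊆ X be a nonempty directed set. Then ⨆_{x∈D} ∑_{i∈I} f_i(x) = ∑_{i∈I} f_i(⨆D). -/
open scoped Classical

universe u v

/-- A semiring that is simultaneously a complete lattice with bottom `0`, whose order
coincides with the natural (additive) order, and in which addition and multiplication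
are Scott-continuous. -/
class OLSemiring (U : Type u) extends Semiring U, CompleteLattice U where
  bot_eq_zero : (⊥ : U) = 0
  le_iff_exists_add : ∀ a b : U, a ≤ b ↔ ∃ c, a + c = b
  add_scott : ∀ (D : Set U), D.Nonempty → DirectedOn (· ≤ ·) D → ∀ y : U,
    sSup ((fun x => x + y) '' D) = sSup D + y
  mul_scott_right : ∀ (D : Set U), D.Nonempty → DirectedOn (· ≤ ·) D → ∀ y : U,
    sSup ((fun x => x * y) '' D) = sSup D * y
  mul_scott_left : ∀ (D : Set U), D.Nonempty → DirectedOn (· ≤ ·) D → ∀ y : U,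
    sSup ((fun x => y * x) '' D) = y * sSup D

variable {U : Type u} [OLSemiring U]

/-- Infinite sum: supremum over finite subfamilies of finite sums. -/
noncomputable def wsum {I : Type v} (f : I → U) : U :=
  ⨆ J : Finset I, ∑ i ∈ J, f i

/-- The unit of the weighting monad. -/
noncomputable def eta {X : Type u} (x : X) : X → U :=
  fun y => if y = x then 1 else 0

/-- Kleisli extension: `kext f m y = ∑_{x ∈ supp m} m x * f x y`. -/
noncomputable def kext {X Y : Type u} (f : X → Y → U) (m : X → U) : Y → U :=
  fun y => wsum (fun x : Function.support m => m x.1 * f x.1 y)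


lemma OL.add_le_add {a b c d : U} (hab : a ≤ b) (hcd : c ≤ d) : a + c ≤ b + d := by
  obtain ⟨u, hu⟩ := (OLSemiring.le_iff_exists_add a b).1 hab
  obtain ⟨v, hv⟩ := (OLSemiring.le_iff_exists_add c d).1 hcd
  exact (OLSemiring.le_iff_exists_add _ _).2 ⟨u + v, by rw [← hu, ← hv]; abel⟩

lemma OL.sum_le_sum {I : Type*} {J : Finset I} {g h : I → U}
    (hgh : ∀ i ∈ J, g i ≤ h i) : ∑ i ∈ J, g i ≤ ∑ i ∈ J, h i := by
  classical
  induction J using Finset.induction_on with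
  | empty => simp
  | insert _ _ hx ih =>
    rw [Finset.sum_insert hx, Finset.sum_insert hx]
    exact OL.add_le_add (hgh _ (Finset.mem_insert_self _ _))
      (ih fun i hi => hgh i (Finset.mem_insert_of_mem hi))

lemma OL.mono_of_scott {X : Type*} [CompleteLattice X] (g : X → U)
    (hg : ∀ (D : Set X), D.Nonempty → DirectedOn (· ≤ ·) D →
      sSup (g '' D) = g (sSup D)) : Monotone g := by
  intro x y hxy
  have hdir : DirectedOn (· ≤ ·) ({x, y} : Set X) := by
    intro a ha b hb
    exact ⟨y, by simp, by rcases ha with rfl | rfl <;> simp [hxy],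
      by rcases hb with rfl | rfl <;> simp [hxy]⟩
  have := hg {x, y} ⟨x, by simp⟩ hdir
  rw [sSup_pair, sup_eq_right.2 hxy] at this
  rw [← this]
  exact le_sSup ⟨x, by simp, rfl⟩

lemma OL.directedOn_image {X : Type*} [CompleteLattice X] {g : X → U}
    (hg : Monotone g) {D : Set X} (hdir : DirectedOn (· ≤ ·) D) :
    DirectedOn (· ≤ ·) (g '' D) := by
  rintro _ ⟨x, hx, rfl⟩ _ ⟨y, hy, rfl⟩
  obtain ⟨z, hz, hxz, hyz⟩ := hdir x hx y hy
  exact ⟨g z, ⟨z, hz, rfl⟩, hg hxz, hg hyz⟩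

lemma OL.sSup_add_sSup_le {X : Type*} [CompleteLattice X] (g h : X → U)
    (hg : Monotone g) (hh : Monotone h) (D : Set X) (hne : D.Nonempty)
    (hdir : DirectedOn (· ≤ ·) D) :
    sSup (g '' D) + sSup (h '' D) ≤ sSup ((fun x => g x + h x) '' D) := by
  rw [← OLSemiring.add_scott (g '' D) (hne.image g) (OL.directedOn_image hg hdir)]
  apply sSup_le
  rintro _ ⟨_, ⟨x, hx, rfl⟩, rfl⟩
  have : g x + sSup (h '' D) = sSup ((fun b => b + g x) '' (h '' D)) := by
    rw [OLSemiring.add_scott (h '' D) (hne.image h) (OL.directedOn_image hh hdir)]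
    exact add_comm _ _
  show g x + sSup (h '' D) ≤ _
  rw [this]
  apply sSup_le
  rintro _ ⟨_, ⟨y, hy, rfl⟩, rfl⟩
  obtain ⟨z, hz, hxz, hyz⟩ := hdir x hx y hy
  calc h y + g x ≤ g z + h z := by
        rw [add_comm]; exact OL.add_le_add (hg hxz) (hh hyz)
    _ ≤ sSup ((fun x => g x + h x) '' D) := le_sSup ⟨z, hz, rfl⟩

/-- **Continuity of infinite sums**: if every `f i : X → U` is Scott-continuous and
`D ⊆ X` is a nonempty directed set, then
`⨆_{x∈D} ∑_{i∈I} f i x = ∑_{i∈I} f i (⨆ D)`. -/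
theorem wsum_scott_continuous {U : Type u} [OLSemiring U] {X : Type v}
    [CompleteLattice X] {I : Type w} (f : I → X → U)
    (hf : ∀ i (D : Set X), D.Nonempty → DirectedOn (· ≤ ·) D →
      sSup (f i '' D) = f i (sSup D))
    (D : Set X) (hne : D.Nonempty) (hdir : DirectedOn (· ≤ ·) D) :
    sSup ((fun x => wsum (fun i => f i x)) '' D) = wsum (fun i => f i (sSup D)) := by
  have hmono : ∀ i, Monotone (f i) := fun i => OL.mono_of_scott (f i) (hf i)
  apply le_antisymm
  · apply sSup_le
    rintro _ ⟨x, hx, rfl⟩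
    apply iSup_le
    intro J
    calc ∑ i ∈ J, f i x ≤ ∑ i ∈ J, f i (sSup D) :=
          OL.sum_le_sum fun i _ => hmono i (le_sSup hx)
      _ ≤ _ := le_iSup (fun J : Finset I => ∑ i ∈ J, f i (sSup D)) J
  · apply iSup_le
    intro J
    have key : ∑ i ∈ J, f i (sSup D) ≤ sSup ((fun x => ∑ i ∈ J, f i x) '' D) := by
      classical
      induction J using Finset.induction_on with
      | empty =>
        simp only [Finset.sum_empty]
        rw [← OLSemiring.bot_eq_zero]
        exact bot_le
      | @insert a J ha ih =>
        simp only [Finset.sum_insert ha]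
        calc f a (sSup D) + ∑ i ∈ J, f i (sSup D)
            ≤ sSup (f a '' D) + sSup ((fun x => ∑ i ∈ J, f i x) '' D) := by
              rw [hf a D hne hdir]; exact OL.add_le_add le_rfl ih
          _ ≤ _ := OL.sSup_add_sSup_le (f a) (fun x => ∑ i ∈ J, f i x)
              (hmono a) (fun x y hxy => OL.sum_le_sum fun i _ => hmono i hxy)
              D hne hdir
    refine key.trans (sSup_le ?_)
    rintro _ ⟨x, hx, rfl⟩
    refine le_trans (le_iSup (fun J : Finset I => ∑ i ∈ J, f i x) J) ?_
    exact le_sSup ⟨x, hx, rfl⟩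
end

section
/- The weighting functions form a Kleisli triple: for all sets X, Y, Z, all f : X → W(Y), g : Y → W(Z), m ∈ W(X) and x ∈ X: (i) f†(m) has countable support, so f†(m) ∈ W(Y); (ii) η†(m) = m; (iii) f†(η(x)) = f(x); and (iv) g†(f†(m)) = (g† ∘ f)†(m). -/
open scoped Classical

universe u v

variable {U : Type u} [OLSemiring U]

/-! ### Auxiliary order lemmas -/

instance (priority := 100) OLSemiring.toIsOrderedAddMonoid :
    IsOrderedAddMonoid U :=
  { add_le_add_left := by
      intro a b hab c
      obtain ⟨d, rfl⟩ := (OLSemiring.le_iff_exists_add a b).1 hab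
      exact (OLSemiring.le_iff_exists_add _ _).2 ⟨d, add_right_comm _ _ _⟩ }

instance (priority := 100) OLSemiring.toCanonicallyOrderedAdd :
    CanonicallyOrderedAdd U :=
  { exists_add_of_le := fun h =>
      ((OLSemiring.le_iff_exists_add _ _).1 h).imp fun _ hc => hc.symm
    le_add_self := fun a b => (OLSemiring.le_iff_exists_add _ _).2 ⟨b, add_comm _ _⟩
    le_self_add := fun a b => (OLSemiring.le_iff_exists_add _ _).2 ⟨b, rfl⟩ }

lemma sum_directed {I : Type v} (f : I → U) :
    Directed (· ≤ ·) (fun J : Finset I => ∑ i ∈ J, f i) := fun J K =>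
  ⟨J ∪ K, Finset.sum_le_sum_of_subset Finset.subset_union_left,
    Finset.sum_le_sum_of_subset Finset.subset_union_right⟩

lemma iSup_add' {ι : Type v} [Nonempty ι] {g : ι → U} (hg : Directed (· ≤ ·) g) (c : U) :
    (⨆ i, g i) + c = ⨆ i, (g i + c) := by
  have h := OLSemiring.add_scott (Set.range g) (Set.range_nonempty g)
    hg.directedOn_range c
  have himg : ((fun x => x + c) '' Set.range g) = Set.range (fun i => g i + c) := by
    rw [← Set.range_comp]; rfl
  rw [himg, sSup_range, sSup_range] at h
  exact h.symm

lemma add_iSup' {ι : Type v} [Nonempty ι] {g : ι → U} (hg : Directed (· ≤ ·) g) (c : U) :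
    c + (⨆ i, g i) = ⨆ i, (c + g i) := by
  rw [add_comm, iSup_add' hg c]
  simp [add_comm]

lemma iSup_mul' {ι : Type v} [Nonempty ι] {g : ι → U} (hg : Directed (· ≤ ·) g) (c : U) :
    (⨆ i, g i) * c = ⨆ i, (g i * c) := by
  have h := OLSemiring.mul_scott_right (Set.range g) (Set.range_nonempty g)
    hg.directedOn_range c
  have himg : ((fun x => x * c) '' Set.range g) = Set.range (fun i => g i * c) := by
    rw [← Set.range_comp]; rfl
  rw [himg, sSup_range, sSup_range] at h
  exact h.symm

lemma mul_iSup' {ι : Type v} [Nonempty ι] {g : ι → U} (hg : Directed (· ≤ ·) g) (c : U) :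
    c * (⨆ i, g i) = ⨆ i, (c * g i) := by
  have h := OLSemiring.mul_scott_left (Set.range g) (Set.range_nonempty g)
    hg.directedOn_range c
  have himg : ((fun x => c * x) '' Set.range g) = Set.range (fun i => c * g i) := by
    rw [← Set.range_comp]; rfl
  rw [himg, sSup_range, sSup_range] at h
  exact h.symm

/-! ### Basic `wsum` lemmas -/

lemma sum_le_wsum {I : Type v} (f : I → U) (J : Finset I) : ∑ i ∈ J, f i ≤ wsum f :=
  le_iSup (fun J : Finset I => ∑ i ∈ J, f i) J

lemma le_wsum {I : Type v} (f : I → U) (i : I) : f i ≤ wsum f := by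
  simpa using sum_le_wsum f {i}

lemma wsum_le {I : Type v} {f : I → U} {c : U} (h : ∀ J : Finset I, ∑ i ∈ J, f i ≤ c) :
    wsum f ≤ c := iSup_le h

lemma wsum_eq_zero {I : Type v} {f : I → U} (h : ∀ i, f i = 0) : wsum f = 0 := by
  have : ∀ J : Finset I, ∑ i ∈ J, f i = 0 := fun J => Finset.sum_eq_zero fun i _ => h i
  simp only [wsum, this]
  exact iSup_const

lemma eq_zero_of_wsum_eq_zero {I : Type v} {f : I → U} (h : wsum f = 0) (i : I) : f i = 0 :=
  le_antisymm (h ▸ le_wsum f i) zero_le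

lemma wsum_single {I : Type v} (f : I → U) (i₀ : I)
    (h : ∀ i, i ≠ i₀ → f i = 0) : wsum f = f i₀ := by
  refine le_antisymm (wsum_le fun J => ?_) (le_wsum f i₀)
  calc ∑ i ∈ J, f i ≤ ∑ i ∈ insert i₀ J, f i :=
        Finset.sum_le_sum_of_subset (Finset.subset_insert _ _)
    _ = f i₀ := Finset.sum_eq_single_of_mem i₀ (Finset.mem_insert_self _ _)
        (fun i _ hi => h i hi)

lemma wsum_mul {I : Type v} (f : I → U) (c : U) :
    wsum f * c = wsum (fun i => f i * c) := by
  rw [wsum, iSup_mul' (sum_directed f) c, wsum]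
  simp [Finset.sum_mul]

lemma mul_wsum {I : Type v} (f : I → U) (c : U) :
    c * wsum f = wsum (fun i => c * f i) := by
  rw [wsum, mul_iSup' (sum_directed f) c, wsum]
  simp [Finset.mul_sum]

lemma wsum_embed {I' I : Type v} (e : I' → I) (he : Function.Injective e)
    (f : I → U) (h0 : ∀ i, i ∉ Set.range e → f i = 0) :
    wsum (fun i' => f (e i')) = wsum f := by
  classical
  refine le_antisymm (wsum_le fun J' => ?_) (wsum_le fun J => ?_)
  · calc ∑ i' ∈ J', f (e i') = ∑ i ∈ J'.image e, f i :=
          (Finset.sum_image (fun a _ b _ hab => he hab)).symm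
      _ ≤ wsum f := sum_le_wsum f _
  · have h1 : ∑ i ∈ (J.preimage e he.injOn).image e, f i
        = ∑ i' ∈ J.preimage e he.injOn, f (e i') :=
      Finset.sum_image fun a _ b _ hab => he hab
    rw [Finset.image_preimage e J he.injOn] at h1
    calc ∑ i ∈ J, f i
        = ∑ i ∈ J.filter (· ∈ Set.range e), f i
          + ∑ i ∈ J.filter (fun i => ¬ (i ∈ Set.range e)), f i :=
          (Finset.sum_filter_add_sum_filter_not J _ f).symm
      _ = ∑ i' ∈ J.preimage e he.injOn, f (e i') := by
          rw [h1, Finset.sum_eq_zero (fun i hi => h0 i (Finset.mem_filter.1 hi).2), add_zero]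
      _ ≤ wsum fun i' => f (e i') := sum_le_wsum _ _

lemma wsum_congr {I : Type v} {f g : I → U} (h : ∀ i, f i = g i) : wsum f = wsum g :=
  congrArg wsum (funext h)

lemma wsum_equiv {I' I : Type v} (e : I' ≃ I) (f : I → U) :
    wsum (fun i' => f (e i')) = wsum f :=
  wsum_embed e e.injective f (fun i hi => absurd ⟨e.symm i, e.apply_symm_apply i⟩ hi)

/-! ### Fubini -/

lemma sum_wsum {A B : Type v} (k : A → B → U) (J : Finset A) :
    ∑ a ∈ J, wsum (k a) = ⨆ φ : A → Finset B, ∑ a ∈ J, ∑ b ∈ φ a, k a b := by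
  classical
  induction J using Finset.induction_on with
  | empty =>
    simp only [Finset.sum_empty]
    exact (iSup_const (ι := A → Finset B)).symm
  | @insert a J ha IH =>
    have hSmono : ∀ φ ψ : A → Finset B, (∀ x, φ x ⊆ ψ x) →
        ∑ a' ∈ J, ∑ b ∈ φ a', k a' b ≤ ∑ a' ∈ J, ∑ b ∈ ψ a', k a' b := fun φ ψ hsub =>
      Finset.sum_le_sum fun a' _ => Finset.sum_le_sum_of_subset (hsub a')
    have hSdir : Directed (· ≤ ·) (fun φ : A → Finset B => ∑ a' ∈ J, ∑ b ∈ φ a', k a' b) :=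
      fun φ ψ => ⟨fun x => φ x ∪ ψ x,
        hSmono _ _ (fun _ => Finset.subset_union_left),
        hSmono _ _ (fun _ => Finset.subset_union_right)⟩
    rw [Finset.sum_insert ha, IH, add_iSup' hSdir (wsum (k a))]
    have hw : ∀ φ : A → Finset B, wsum (k a) + ∑ a' ∈ J, ∑ b ∈ φ a', k a' b
        = ⨆ K : Finset B, (∑ b ∈ K, k a b + ∑ a' ∈ J, ∑ b ∈ φ a', k a' b) := fun φ =>
      iSup_add' (sum_directed (k a)) _
    refine le_antisymm (iSup_le fun φ => ?_) (iSup_le fun φ => ?_)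
    · rw [hw φ]
      refine iSup_le fun K => ?_
      have hupdate : ∑ a' ∈ J, ∑ b ∈ Function.update φ a K a', k a' b
          = ∑ a' ∈ J, ∑ b ∈ φ a', k a' b :=
        Finset.sum_congr rfl fun a' ha' => by
          have hne : a' ≠ a := by rintro rfl; exact ha ha'
          rw [Function.update_of_ne hne K φ]
      calc ∑ b ∈ K, k a b + ∑ a' ∈ J, ∑ b ∈ φ a', k a' b
          = ∑ a' ∈ insert a J, ∑ b ∈ Function.update φ a K a', k a' b := by
            rw [Finset.sum_insert ha, Function.update_self, hupdate]
        _ ≤ ⨆ ψ : A → Finset B, ∑ a' ∈ insert a J, ∑ b ∈ ψ a', k a' b :=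
            le_iSup (fun ψ : A → Finset B => ∑ a' ∈ insert a J, ∑ b ∈ ψ a', k a' b)
              (Function.update φ a K)
    · rw [Finset.sum_insert ha]
      calc ∑ b ∈ φ a, k a b + ∑ a' ∈ J, ∑ b ∈ φ a', k a' b
          ≤ ⨆ K : Finset B, (∑ b ∈ K, k a b + ∑ a' ∈ J, ∑ b ∈ φ a', k a' b) :=
            le_iSup (fun K : Finset B => ∑ b ∈ K, k a b + ∑ a' ∈ J, ∑ b ∈ φ a', k a' b) (φ a)
        _ = wsum (k a) + ∑ a' ∈ J, ∑ b ∈ φ a', k a' b := (hw φ).symm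
        _ ≤ ⨆ ψ : A → Finset B, (wsum (k a) + ∑ a' ∈ J, ∑ b ∈ ψ a', k a' b) :=
            le_iSup (fun ψ : A → Finset B => wsum (k a) + ∑ a' ∈ J, ∑ b ∈ ψ a', k a' b) φ

lemma wsum_fubini {A B : Type v} (h : A × B → U) :
    wsum h = wsum (fun a => wsum (fun b => h (a, b))) := by
  classical
  refine le_antisymm (wsum_le fun J => ?_) (wsum_le fun J₁ => ?_)
  · calc ∑ p ∈ J, h p
        ≤ ∑ p ∈ (J.image Prod.fst) ×ˢ (J.image Prod.snd), h p :=
          Finset.sum_le_sum_of_subset (fun p hp =>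
            Finset.mem_product.2 ⟨Finset.mem_image_of_mem _ hp, Finset.mem_image_of_mem _ hp⟩)
      _ = ∑ a ∈ J.image Prod.fst, ∑ b ∈ J.image Prod.snd, h (a, b) := Finset.sum_product _ _ _
      _ ≤ ∑ a ∈ J.image Prod.fst, wsum (fun b => h (a, b)) :=
          Finset.sum_le_sum fun a _ => sum_le_wsum _ _
      _ ≤ wsum (fun a => wsum (fun b => h (a, b))) := sum_le_wsum _ _
  · rw [sum_wsum]
    refine iSup_le fun φ => ?_
    calc ∑ a ∈ J₁, ∑ b ∈ φ a, h (a, b)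
        ≤ ∑ a ∈ J₁, ∑ b ∈ J₁.biUnion φ, h (a, b) :=
          Finset.sum_le_sum fun a haJ =>
            Finset.sum_le_sum_of_subset (fun b hb => Finset.mem_biUnion.2 ⟨a, haJ, hb⟩)
      _ = ∑ p ∈ J₁ ×ˢ J₁.biUnion φ, h p := (Finset.sum_product _ _ _).symm
      _ ≤ wsum h := sum_le_wsum _ _

lemma wsum_comm {A B : Type v} (t : A → B → U) :
    wsum (fun a => wsum (fun b => t a b)) = wsum (fun b => wsum (fun a => t a b)) := by
  rw [← wsum_fubini (fun p : A × B => t p.1 p.2),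
    ← wsum_fubini (fun p : B × A => t p.2 p.1)]
  exact (wsum_equiv (Equiv.prodComm B A) (fun p : A × B => t p.1 p.2)).symm

/-- **Weighting functions form a Kleisli triple**: for `f : X → W(Y)`, `g : Y → W(Z)`,
`m ∈ W(X)` and `x ∈ X`:
(i) `f†(m)` has countable support (so `f†(m) ∈ W(Y)`);
(ii) `η†(m) = m`;
(iii) `f†(η(x)) = f(x)`;
(iv) `g†(f†(m)) = (g† ∘ f)†(m)`. -/
theorem kext_kleisli_triple {U : Type u} [OLSemiring U] {X Y Z : Type u}
    (f : X → Y → U) (g : Y → Z → U) (m : X → U) (x : X)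
    (hm : (Function.support m).Countable)
    (hf : ∀ x, (Function.support (f x)).Countable)
    (hg : ∀ y, (Function.support (g y)).Countable) :
    (Function.support (kext f m)).Countable ∧
    kext (eta (U := U)) m = m ∧
    kext f (eta x) = f x ∧
    kext g (kext f m) = kext (fun x' => kext g (f x')) m := by
  classical
  refine ⟨?_, ?_, ?_, ?_⟩
  · -- (i) countable support
    refine Set.Countable.mono ?_ (hm.biUnion (t := fun x _ => Function.support (f x))
      (fun x _ => hf x))
    intro y hy
    by_contra hmem
    apply hy
    apply wsum_eq_zero
    rintro ⟨x, hx⟩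
    have hfx : f x y = 0 := by
      by_contra hfx
      exact hmem (Set.mem_biUnion hx hfx)
    simp [hfx]
  · -- (ii) left unit
    funext y
    by_cases hy : m y = 0
    · have h0 : kext (eta (U := U)) m y = 0 := by
        apply wsum_eq_zero
        rintro ⟨x', hx'⟩
        by_cases hxy : y = x'
        · exact absurd hy (by rw [hxy]; exact hx')
        · simp [eta, hxy]
      rw [h0, hy]
    · have hy' : y ∈ Function.support m := hy
      have hs := wsum_single
        (fun x' : Function.support m => m x'.1 * eta (U := U) x'.1 y) ⟨y, hy'⟩
        (fun x' hx' => by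
          have hne : y ≠ x'.1 := fun h => hx' (Subtype.ext h.symm)
          simp [eta, hne])
      calc kext (eta (U := U)) m y
          = m y * eta (U := U) y y := hs
        _ = m y := by simp [eta]
  · -- (iii) right unit
    funext y
    by_cases h1 : (1 : U) = 0
    · have hall : ∀ u : U, u = 0 := fun u => by rw [← mul_one u, h1, mul_zero]
      rw [hall (kext f (eta x) y), hall (f x y)]
    · have hx : x ∈ Function.support (eta (U := U) x) := by
        simp [Function.mem_support, eta, h1]
      have hs := wsum_single
        (fun x' : Function.support (eta (U := U) x) => eta (U := U) x x'.1 * f x'.1 y)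
        ⟨x, hx⟩
        (fun x' hx' => by
          have hne : x'.1 ≠ x := fun h => hx' (Subtype.ext h)
          exact absurd (by simp [eta, hne] : eta (U := U) x x'.1 = 0) x'.2)
      calc kext f (eta x) y = eta (U := U) x x * f x y := hs
        _ = f x y := by simp [eta]
  · -- (iv) associativity
    funext z
    calc kext g (kext f m) z
        = wsum (fun y : Function.support (kext f m) =>
            wsum (fun x' : Function.support m => m x'.1 * f x'.1 y.1 * g y.1 z)) :=
          wsum_congr (fun y => wsum_mul (fun x' : Function.support m => m x'.1 * f x'.1 y.1)
            (g y.1 z))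
      _ = wsum (fun y : Y =>
            wsum (fun x' : Function.support m => m x'.1 * f x'.1 y * g y z)) := by
          refine wsum_embed Subtype.val Subtype.val_injective
            (fun y : Y => wsum (fun x' : Function.support m => m x'.1 * f x'.1 y * g y z))
            (fun y hy => ?_)
          rw [Subtype.range_coe] at hy
          have hy0 : kext f m y = 0 := Function.notMem_support.1 hy
          apply wsum_eq_zero
          intro x'
          have h0 : m x'.1 * f x'.1 y = 0 := eq_zero_of_wsum_eq_zero hy0 x'
          rw [h0, zero_mul]
      _ = wsum (fun x' : Function.support m =>
            wsum (fun y : Y => m x'.1 * f x'.1 y * g y z)) :=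
          wsum_comm (fun y (x' : Function.support m) => m x'.1 * f x'.1 y * g y z)
      _ = wsum (fun x' : Function.support m =>
            wsum (fun y : Function.support (f x'.1) => m x'.1 * f x'.1 y.1 * g y.1 z)) := by
          refine wsum_congr (fun x' => ?_)
          refine (wsum_embed Subtype.val Subtype.val_injective
            (fun y : Y => m x'.1 * f x'.1 y * g y z) (fun y hy => ?_)).symm
          rw [Subtype.range_coe] at hy
          have h0 : f x'.1 y = 0 := Function.notMem_support.1 hy
          show m x'.1 * f x'.1 y * g y z = 0
          rw [h0, mul_zero, zero_mul]
      _ = wsum (fun x' : Function.support m =>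
            m x'.1 * wsum (fun y : Function.support (f x'.1) => f x'.1 y.1 * g y.1 z)) := by
          refine wsum_congr (fun x' => ?_)
          rw [mul_wsum]
          exact wsum_congr (fun y => mul_assoc _ _ _)
      _ = kext (fun x' => kext g (f x')) m z := rfl
end

section
/- Scott continuity of Kleisli extension: for all sets X, Y, every m ∈ W(X), and every nonempty directed family D of functions X → W(Y) (ordered pointwise) whose pointwise supremum f* — defined by f*(x)(y) = ⨆_{f∈D} f(x)(y) — has countable support at every x (so f* : X → W(Y)), one has ⨆_{f∈D} f†(m) = (f*)†(m), the supremum on the left taken pointwise in Y → U. -/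
open scoped Classical

universe u v

variable {U : Type u} [OLSemiring U]

section Aux

lemma ol_le_add (a b : U) : a ≤ a + b :=
  (OLSemiring.le_iff_exists_add a (a + b)).2 ⟨b, rfl⟩

lemma ol_add_mono {a b c d : U} (h1 : a ≤ b) (h2 : c ≤ d) : a + c ≤ b + d := by
  obtain ⟨e, he⟩ := (OLSemiring.le_iff_exists_add a b).1 h1
  obtain ⟨f, hf⟩ := (OLSemiring.le_iff_exists_add c d).1 h2
  refine (OLSemiring.le_iff_exists_add _ _).2 ⟨e + f, ?_⟩
  rw [← he, ← hf]; abel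

lemma ol_mul_mono_left (u : U) {a b : U} (h : a ≤ b) : u * a ≤ u * b := by
  obtain ⟨e, he⟩ := (OLSemiring.le_iff_exists_add a b).1 h
  refine (OLSemiring.le_iff_exists_add _ _).2 ⟨u * e, ?_⟩
  rw [← mul_add, he]

lemma ol_directedOn_image {σ : Type*} [Preorder σ] {D : Set σ}
    (hdir : DirectedOn (· ≤ ·) D) {c : σ → U} (hc : Monotone c) :
    DirectedOn (· ≤ ·) (c '' D) := by
  rintro _ ⟨f, hf, rfl⟩ _ ⟨g, hg, rfl⟩
  obtain ⟨h, hh, hfh, hgh⟩ := hdir f hf g hg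
  exact ⟨c h, ⟨h, hh, rfl⟩, hc hfh, hc hgh⟩

lemma ol_mul_biSup {σ : Type*} [Preorder σ] {D : Set σ} (hne : D.Nonempty)
    (hdir : DirectedOn (· ≤ ·) D) (u : U) (c : σ → U) (hc : Monotone c) :
    u * (⨆ f ∈ D, c f) = ⨆ f ∈ D, u * c f := by
  have h := OLSemiring.mul_scott_left (c '' D) (hne.image c)
    (ol_directedOn_image hdir hc) u
  rw [Set.image_image] at h
  rw [← sSup_image, ← sSup_image, h]

lemma ol_biSup_add {σ : Type*} [Preorder σ] {D : Set σ} (hne : D.Nonempty)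
    (hdir : DirectedOn (· ≤ ·) D) (a b : σ → U) (ha : Monotone a) (hb : Monotone b) :
    (⨆ f ∈ D, (a f + b f)) = (⨆ f ∈ D, a f) + ⨆ f ∈ D, b f := by
  apply le_antisymm
  · exact iSup₂_le fun f hf => ol_add_mono (le_iSup₂ (f := fun f _ => a f) f hf)
      (le_iSup₂ (f := fun f _ => b f) f hf)
  · have h1 := OLSemiring.add_scott (a '' D) (hne.image a)
      (ol_directedOn_image hdir ha) (⨆ f ∈ D, b f)
    rw [Set.image_image] at h1
    rw [show (⨆ f ∈ D, a f) = sSup (a '' D) from (sSup_image).symm, ← h1]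
    refine sSup_le ?_
    rintro _ ⟨f, hf, rfl⟩
    have h2 := OLSemiring.add_scott (b '' D) (hne.image b)
      (ol_directedOn_image hdir hb) (a f)
    rw [Set.image_image] at h2
    have : a f + (⨆ f ∈ D, b f) = sSup ((fun g => b g + a f) '' D) := by
      rw [show (⨆ f ∈ D, b f) = sSup (b '' D) from (sSup_image).symm, add_comm]
      exact h2.symm
    show a f + (⨆ f ∈ D, b f) ≤ _
    rw [this]
    refine sSup_le ?_
    rintro _ ⟨g, hg, rfl⟩
    obtain ⟨h, hh, hfh, hgh⟩ := hdir f hf g hg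
    calc b g + a f ≤ b h + a h := ol_add_mono (hb hgh) (ha hfh)
      _ = a h + b h := add_comm _ _
      _ ≤ ⨆ f ∈ D, (a f + b f) := le_iSup₂ (f := fun f _ => a f + b f) h hh

lemma ol_sum_le_sum {ι : Type*} (J : Finset ι) (f g : ι → U)
    (h : ∀ i ∈ J, f i ≤ g i) : ∑ i ∈ J, f i ≤ ∑ i ∈ J, g i := by
  classical
  induction J using Finset.induction with
  | empty => simp
  | insert _ _ hni ih =>
    rw [Finset.sum_insert hni, Finset.sum_insert hni]
    exact ol_add_mono (h _ (Finset.mem_insert_self _ _))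
      (ih fun i hi => h i (Finset.mem_insert_of_mem hi))

lemma ol_biSup_sum {σ : Type*} [Preorder σ] {D : Set σ} (hne : D.Nonempty)
    (hdir : DirectedOn (· ≤ ·) D) {ι : Type*} (g : ι → σ → U)
    (hg : ∀ i, Monotone (g i)) (J : Finset ι) :
    (⨆ f ∈ D, ∑ i ∈ J, g i f) = ∑ i ∈ J, ⨆ f ∈ D, g i f := by
  classical
  induction J using Finset.induction with
  | empty =>
    simp only [Finset.sum_empty]
    exact biSup_const hne
  | insert _ _ hni ih =>
    simp only [Finset.sum_insert hni]
    rw [ol_biSup_add hne hdir _ _ (hg _)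
      (fun f f' hff' => ol_sum_le_sum _ _ _ (fun i _ => hg i hff')), ih]

end Aux

/-- **Scott continuity of Kleisli extension**: for `m ∈ W(X)` and a nonempty directed
family `D` of functions `X → W(Y)` (pointwise order) whose pointwise supremum `f*` has
countable support at every `x`, one has `⨆_{f∈D} f†(m) = (f*)†(m)` (pointwise). -/
theorem kext_scott_continuous {U : Type u} [OLSemiring U] {X Y : Type u}
    (m : X → U) (hm : (Function.support m).Countable)
    (D : Set (X → Y → U)) (hne : D.Nonempty) (hdir : DirectedOn (· ≤ ·) D)
    (hD : ∀ f ∈ D, ∀ x, (Function.support (f x)).Countable)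
    (hstar : ∀ x, (Function.support (fun y => ⨆ f ∈ D, f x y)).Countable) :
    (fun y => ⨆ f ∈ D, kext f m y) = kext (fun x y => ⨆ f ∈ D, f x y) m := by
  funext y
  unfold kext wsum
  have step1 : ∀ J : Finset (Function.support m),
      (∑ x ∈ J, m x.1 * ⨆ f ∈ D, f x.1 y) =
      ⨆ f ∈ D, ∑ x ∈ J, m x.1 * f x.1 y := by
    intro J
    rw [ol_biSup_sum hne hdir (fun x f => m x.1 * f x.1 y)
      (fun x f f' h => ol_mul_mono_left _ (h x.1 y)) J]
    exact Finset.sum_congr rfl fun x _ => ol_mul_biSup hne hdir _ _ (fun f f' h => h x.1 y)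
  simp only [step1]
  apply le_antisymm
  · refine iSup₂_le fun f hf => iSup_le fun J => ?_
    exact le_iSup_of_le J (le_iSup₂ (f := fun f _ => ∑ x ∈ J, m x.1 * f x.1 y) f hf)
  · refine iSup_le fun J => iSup₂_le fun f hf => ?_
    exact le_iSup₂_of_le f hf
      (le_iSup (fun J : Finset (Function.support m) => ∑ x ∈ J, m x.1 * f x.1 y) J)
end

section
/- Semantic soundness of the rule of Constancy: in the Outcome Logic instance with variable assignment, for every program C and every P ⊆ S with free(P) ∩ mod(C) = ∅, the triple ⟨◻P⟩C⟨◻P⟩ is semantically valid: for every m ∈ W(S) with supp(m) ⊆ P, one has supp(⟦C⟧†(m)) ⊆ P. -/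
open scoped Classical

universe u v

variable {U : Type u} [OLSemiring U]

/-- Syntax of tests over primitive tests indexed by `TI`. -/
inductive TestExpr (TI : Type u) : Type u where
  | prim (t : TI)
  | tt
  | ff
  | and (b₁ b₂ : TestExpr TI)
  | or (b₁ b₂ : TestExpr TI)
  | not (b : TestExpr TI)

/-- The set of states at which a test is true. -/
def testSet {St TI : Type u} (tsem : TI → Set St) : TestExpr TI → Set St
  | .prim t => tsem t
  | .tt => Set.univ
  | .ff => ∅
  | .and b₁ b₂ => testSet tsem b₁ ∩ testSet tsem b₂
  | .or b₁ b₂ => testSet tsem b₁ ∪ testSet tsem b₂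
  | .not b => (testSet tsem b)ᶜ

/-- Expressions: a test or a weight. -/
inductive Expr (U : Type u) (TI : Type u) : Type u where
  | test (b : TestExpr TI)
  | wt (u : U)

/-- Evaluation of expressions into weights. -/
noncomputable def eeval {St TI : Type u} (tsem : TI → Set St) : Expr U TI → St → U
  | .test b => fun σ => if σ ∈ testSet tsem b then 1 else 0
  | .wt u => fun _ => u

/-- Programs. -/
inductive Prog (U St TI Act : Type u) : Type u where
  | skip
  | seq (C₁ C₂ : Prog U St TI Act)
  | choice (C₁ C₂ : Prog U St TI Act)
  | assume (e : Expr U TI)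
  | iter (C : Prog U St TI Act) (e e' : Expr U TI)
  | act (a : Act)

/-- The characteristic function of iteration. -/
noncomputable def Phi {St : Type u} (w w' : St → U) (g : St → St → U)
    (f : St → St → U) : St → St → U :=
  fun σ τ => w σ * kext f (g σ) τ + w' σ * eta σ τ

/-- Denotational semantics of programs. -/
noncomputable def sem {St TI Act : Type u} (tsem : TI → Set St)
    (asem : Act → St → St → U) : Prog U St TI Act → St → St → U
  | .skip => fun σ => eta σ
  | .seq C₁ C₂ => fun σ => kext (sem tsem asem C₂) (sem tsem asem C₁ σ)
  | .choice C₁ C₂ => fun σ τ => sem tsem asem C₁ σ τ + sem tsem asem C₂ σ τ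
  | .assume e => fun σ τ => eeval tsem e σ * eta σ τ
  | .iter C e e' =>
      ⨆ n : ℕ, (Phi (eeval tsem e) (eeval tsem e') (sem tsem asem C))^[n] (fun _ _ => 0)
  | .act a => asem a

/-- Outcome assertions. -/
abbrev OA (U : Type u) (St : Type u) := Set (St → U)

/-- Binary outcome conjunction. -/
def oplus {St : Type u} (φ ψ : OA U St) : OA U St :=
  { m | ∃ m₁ ∈ φ, ∃ m₂ ∈ ψ, m = fun σ => m₁ σ + m₂ σ }

/-- Indexed outcome conjunction. -/
noncomputable def bigOplus {St T : Type u} (φ : T → OA U St) : OA U St :=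
  { m | ∃ f : T → St → U, (∀ t, f t ∈ φ t) ∧ m = fun σ => wsum (fun t => f t σ) }

/-- Right scaling of an assertion by a weight. -/
def odotR {St : Type u} (φ : OA U St) (u : U) : OA U St :=
  { m' | ∃ m ∈ φ, m' = fun σ => m σ * u }

/-- Left scaling of an assertion by a weight. -/
def odotL {St : Type u} (u : U) (φ : OA U St) : OA U St :=
  { m' | ∃ m ∈ φ, m' = fun σ => u * m σ }

/-- `φ ⊨ e = u` : the expression `e` evaluates to `u` on the support of every `m ∈ φ`. -/
def entailsEq {St TI : Type u} (tsem : TI → Set St) (φ : OA U St)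
    (e : Expr U TI) (u : U) : Prop :=
  ∀ m ∈ φ, ∀ σ, m σ ≠ 0 → eeval tsem e σ = u

/-- Semantic validity of an outcome triple. -/
def valid {St TI Act : Type u} (tsem : TI → Set St) (asem : Act → St → St → U)
    (φ : OA U St) (C : Prog U St TI Act) (ψ : OA U St) : Prop :=
  ∀ m ∈ φ, kext (sem tsem asem C) m ∈ ψ

/-- The family `ψ` of assertions converges to `ψlim`. -/
def convergesTo {St : Type u} (ψ : ℕ → OA U St) (ψlim : OA U St) : Prop :=
  ∀ ms : ℕ → St → U, (∀ n, ms n ∈ ψ n) → (fun σ => wsum (fun n => ms n σ)) ∈ ψlim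

/-- The Outcome Logic proof system (with oracle axioms for valid atomic triples). -/
inductive Deriv {St TI Act : Type u} (tsem : TI → Set St) (asem : Act → St → St → U) :
    OA U St → Prog U St TI Act → OA U St → Prop where
  | atom {φ ψ} (a : Act) :
      valid tsem asem φ (.act a) ψ → Deriv tsem asem φ (.act a) ψ
  | skip (φ) : Deriv tsem asem φ .skip φ
  | seq {φ ϑ ψ C₁ C₂} :
      Deriv tsem asem φ C₁ ϑ → Deriv tsem asem ϑ C₂ ψ →
      Deriv tsem asem φ (.seq C₁ C₂) ψ
  | plus {φ ψ₁ ψ₂ C₁ C₂} :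
      Deriv tsem asem φ C₁ ψ₁ → Deriv tsem asem φ C₂ ψ₂ →
      Deriv tsem asem φ (.choice C₁ C₂) (oplus ψ₁ ψ₂)
  | assume {φ e u} :
      entailsEq tsem φ e u → Deriv tsem asem φ (.assume e) (odotR φ u)
  | iter {C e e'} (φn ψn : ℕ → OA U St) (ψlim : OA U St) :
      convergesTo ψn ψlim →
      (∀ n, Deriv tsem asem (φn n) (.seq (.assume e) C) (φn (n + 1))) →
      (∀ n, Deriv tsem asem (φn n) (.assume e') (ψn n)) →
      Deriv tsem asem (φn 0) (.iter C e e') ψlim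
  | false (C φ) : Deriv tsem asem ∅ C φ
  | true (C φ) : Deriv tsem asem φ C Set.univ
  | scale {φ ψ C} (u : U) :
      Deriv tsem asem φ C ψ → Deriv tsem asem (odotL u φ) C (odotL u ψ)
  | disj {φ₁ φ₂ ψ₁ ψ₂ C} :
      Deriv tsem asem φ₁ C ψ₁ → Deriv tsem asem φ₂ C ψ₂ →
      Deriv tsem asem (φ₁ ∪ φ₂) C (ψ₁ ∪ ψ₂)
  | conj {φ₁ φ₂ ψ₁ ψ₂ C} :
      Deriv tsem asem φ₁ C ψ₁ → Deriv tsem asem φ₂ C ψ₂ →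
      Deriv tsem asem (φ₁ ∩ φ₂) C (ψ₁ ∩ ψ₂)
  | choice {T : Type u} {C} (φ φ' : T → OA U St) :
      (∀ t, Deriv tsem asem (φ t) C (φ' t)) →
      Deriv tsem asem (bigOplus φ) C (bigOplus φ')
  | exists_ {T : Type u} {C} (φ φ' : T → OA U St) :
      (∀ t, Deriv tsem asem (φ t) C (φ' t)) →
      Deriv tsem asem (⋃ t, φ t) C (⋃ t, φ' t)
  | conseq {φ φ' ψ ψ' C} :
      φ' ⊆ φ → Deriv tsem asem φ C ψ → ψ ⊆ ψ' →
      Deriv tsem asem φ' C ψ'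

/-! ## The instance with variables and state -/

/-- Program stores: maps from variables to integers. -/
abbrev Store (Var : Type) := Var → ℤ

/-- Arithmetic expressions over variables `Var` (tests evaluate to 0 or 1). -/
inductive AExpr (Var : Type) : Type where
  | var (x : Var)
  | const (v : ℤ)
  | test (b : TestExpr (Set (Store Var)))
  | add (E₁ E₂ : AExpr Var)
  | sub (E₁ E₂ : AExpr Var)
  | mul (E₁ E₂ : AExpr Var)

/-- Evaluation of arithmetic expressions. -/
noncomputable def aeval {Var : Type} : AExpr Var → Store Var → ℤ
  | .var x, s => s x
  | .const v, _ => v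
  | .test b, s => if s ∈ testSet id b then 1 else 0
  | .add E₁ E₂, s => aeval E₁ s + aeval E₂ s
  | .sub E₁ E₂, s => aeval E₁ s - aeval E₂ s
  | .mul E₁ E₂, s => aeval E₁ s * aeval E₂ s

/-- Semantics of the assignment action `x := E` : `⟦x:=E⟧(s) = η(s[x↦⟦E⟧(s)])`. -/
noncomputable def asemAssign (U : Type) [OLSemiring U] {Var : Type} :
    Var × AExpr Var → Store Var → Store Var → U :=
  fun a s => eta (Function.update s a.1 (aeval a.2 s))

/-- Programs of the instance with state: primitive tests are all subsets of stores and
atomic actions are assignments. -/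
abbrev ProgS (U Var : Type) := Prog U (Store Var) (Set (Store Var)) (Var × AExpr Var)

/-- Substitution on outcome assertions:
`φ[E/x] = {m | (λs. η(s[x↦⟦E⟧(s)]))†(m) ∈ φ}`. -/
def substOA {U : Type} [OLSemiring U] {Var : Type} (x : Var) (E : AExpr Var)
    (φ : OA U (Store Var)) : OA U (Store Var) :=
  { m | kext (fun s => eta (Function.update s x (aeval E s))) m ∈ φ }

/-- `◻P = {m | supp(m) ⊆ P}`. -/
def boxOA {U : Type} [OLSemiring U] {Var : Type} (P : Set (Store Var)) :
    OA U (Store Var) :=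
  { m | Function.support m ⊆ P }

/-- The free variables of an assertion on stores. -/
def freeVars {Var : Type} (P : Set (Store Var)) : Set Var :=
  { x | ∃ s ∈ P, ∃ v : ℤ, Function.update s x v ∉ P }

/-- The variables modified by a program. -/
def modVars {U Var : Type} : ProgS U Var → Set Var
  | .skip => ∅
  | .seq C₁ C₂ => modVars C₁ ∪ modVars C₂
  | .choice C₁ C₂ => modVars C₁ ∪ modVars C₂
  | .assume _ => ∅
  | .iter C _ _ => modVars C
  | .act a => {a.1}

lemma wsum_ne {I : Type v} {f : I → U} (h : wsum f ≠ 0) : ∃ i, f i ≠ 0 := by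
  by_contra hc
  push_neg at hc
  exact h (by simp [wsum, hc])

lemma eta_ne {X : Type u} {x y : X} (h : (eta x y : U) ≠ 0) : y = x := by
  by_contra hc
  exact h (if_neg hc)

lemma kext_ne {X Y : Type u} {f : X → Y → U} {m : X → U} {y : Y}
    (h : kext f m y ≠ 0) : ∃ x, m x ≠ 0 ∧ f x y ≠ 0 := by
  obtain ⟨⟨x, hx⟩, hne⟩ := wsum_ne h
  refine ⟨x, hx, fun h0 => hne ?_⟩
  simp [h0]

lemma add_ne' {a b : U} (h : a + b ≠ 0) : a ≠ 0 ∨ b ≠ 0 := by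
  by_contra hc
  push_neg at hc
  exact h (by simp [hc.1, hc.2])

lemma sem_support (U : Type) [OLSemiring U] {Var : Type}
    (P : Set (Store Var)) :
    ∀ (C : ProgS U Var), (∀ x ∈ freeVars P, x ∉ modVars C) →
      ∀ σ ∈ P, ∀ τ, sem id (asemAssign U) C σ τ ≠ 0 → τ ∈ P := by
  intro C
  induction C with
  | skip =>
    intro _ σ hσ τ h
    have := eta_ne h
    subst this; exact hσ
  | seq C₁ C₂ ih₁ ih₂ =>
    intro hd σ hσ τ h
    simp only [sem] at h
    obtain ⟨x, hx, hfx⟩ := kext_ne h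
    have hxP := ih₁ (fun v hv hm => hd v hv (Or.inl hm)) σ hσ x hx
    exact ih₂ (fun v hv hm => hd v hv (Or.inr hm)) x hxP τ hfx
  | choice C₁ C₂ ih₁ ih₂ =>
    intro hd σ hσ τ h
    simp only [sem] at h
    rcases add_ne' h with h1 | h2
    · exact ih₁ (fun v hv hm => hd v hv (Or.inl hm)) σ hσ τ h1
    · exact ih₂ (fun v hv hm => hd v hv (Or.inr hm)) σ hσ τ h2
  | assume e =>
    intro _ σ hσ τ h
    simp only [sem] at h
    have he : (eta σ τ : U) ≠ 0 := fun h0 => h (by simp [h0])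
    have := eta_ne he
    subst this; exact hσ
  | iter C e e' ih =>
    intro hd σ hσ τ h
    simp only [sem] at h
    rw [iSup_apply] at h
    simp only [iSup_apply] at h
    have hex : ∃ n, (Phi (eeval id e) (eeval id e')
        (sem id (asemAssign U) C))^[n] (fun _ _ => 0) σ τ ≠ 0 := by
      by_contra hc
      push_neg at hc
      exact h (by simp [hc])
    obtain ⟨n, hn⟩ := hex
    have key : ∀ n, ∀ σ ∈ P, ∀ τ, (Phi (eeval id e) (eeval id e')
        (sem id (asemAssign U) C))^[n] (fun _ _ => 0) σ τ ≠ 0 → τ ∈ P := by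
      intro n
      induction n with
      | zero => intro σ _ τ h0; exact absurd rfl h0
      | succ n ihn =>
        intro σ hσ τ h0
        rw [Function.iterate_succ_apply'] at h0
        simp only [Phi] at h0
        rcases add_ne' h0 with h1 | h2
        · have hk : kext ((Phi (eeval id e) (eeval id e')
              (sem id (asemAssign U) C))^[n] (fun _ _ => 0))
              (sem id (asemAssign U) C σ) τ ≠ 0 := fun hk0 => h1 (by rw [hk0, mul_zero])
          obtain ⟨x, hx, hfx⟩ := kext_ne hk
          exact ihn x (ih hd σ hσ x hx) τ hfx
        · have he : (eta σ τ : U) ≠ 0 := fun h0' => h2 (by rw [h0', mul_zero])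
          have := eta_ne he
          subst this; exact hσ
    exact key n σ hσ τ hn
  | act a =>
    intro hd σ hσ τ h
    simp only [sem, asemAssign] at h
    have hτ := eta_ne h
    subst hτ
    by_contra hP
    exact hd a.1 ⟨σ, hσ, aeval a.2 σ, hP⟩ rfl

/-- **Semantic soundness of the rule of Constancy**: in the instance with variable
assignment, if `free(P) ∩ mod(C) = ∅` then `⊨ ⟨◻P⟩C⟨◻P⟩`: for every `m ∈ W(S)` with
`supp(m) ⊆ P`, also `supp(⟦C⟧†(m)) ⊆ P`. -/
theorem constancy_semantically_sound (U : Type) [OLSemiring U]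
    (Var : Type) [Countable Var]
    (C : ProgS U Var) (P : Set (Store Var))
    (hfm : freeVars P ∩ modVars C = ∅)
    (m : Store Var → U) (hm : Function.support m ⊆ P) :
    Function.support (kext (sem id (asemAssign U) C) m) ⊆ P := by
  intro τ hτ
  obtain ⟨x, hx, hfx⟩ := kext_ne (Function.mem_support.mp hτ)
  exact sem_support U P C
    (fun v hv hm => Set.eq_empty_iff_forall_notMem.mp hfm v ⟨hv, hm⟩)
    x (hm hx) τ hfx
end
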